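/- For every integer n ≥ 1, the Grundy value of the GA1 position given by the constant bit string of length n (a single run of length n) equals the single-heap Kayles Grundy value K(n−1). -/

import Mathlib

/-- The minimum excludant of a set of naturals. -/
noncomputable def mex (S : Set ℕ) : ℕ := sInf {n : ℕ | n ∉ S}

/-- The entropy of a bit string: the number of adjacent pairs of unequal bits. -/
def entropy (b : List Bool) : ℕ := (b.zip b.tail).countP fun p => p.1 != p.2

/-- Crossover at position `k` (1-indexed): flip bits `b₁,…,b_k`. -/
def ga1Crossover (k : ℕ) (b : List Bool) : List Bool := (b.take k).map (! ·) ++ b.drop k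

/-- Mutation at (0-indexed) position `i`: flip bit `i`. -/
def ga1Mutate (i : ℕ) (b : List Bool) : List Bool := b.set i (!(b.getD i false))

/-- The legal moves of GA1: a crossover or a mutation that strictly increases entropy. -/
def ga1Move (b b' : List Bool) : Prop :=
  ((∃ k, 1 ≤ k ∧ k ≤ b.length - 1 ∧ b' = ga1Crossover k b) ∨
    (∃ i, i < b.length ∧ b' = ga1Mutate i b)) ∧
  entropy b < entropy b'

namespace GA1Aux

def diff (b : List Bool) : List Bool := (b.zip b.tail).map fun p => p.1 != p.2

@[simp] lemma length_diff (b : List Bool) : (diff b).length = b.length - 1 := by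
  simp only [diff, List.length_map, List.length_zip, List.length_tail]
  omega

lemma getElem_diff {b : List Bool} {j : ℕ} (h : j < (diff b).length) :
    (diff b)[j] = ((b[j]'(by simp at h; omega)) != (b[j + 1]'(by simp at h; omega))) := by
  simp only [diff, List.getElem_map, List.getElem_zip]
  congr 1
  exact List.getElem_tail _

lemma getD_diff {b : List Bool} {j : ℕ} (h : j < (diff b).length) :
    (diff b).getD j true = ((b[j]'(by simp at h; omega)) != (b[j + 1]'(by simp at h; omega))) := by
  rw [List.getD_eq_getElem _ _ h, getElem_diff h]


lemma getElem_idx_congr {l : List Bool} {i j : ℕ} (h : i = j) (hi : i < l.length) :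
    l[i]'hi = l[j]'(h ▸ hi) := by subst h; rfl

@[simp] lemma length_crossover (k : ℕ) (b : List Bool) :
    (ga1Crossover k b).length = b.length := by
  simp [ga1Crossover]
  omega

lemma getElem_crossover {k : ℕ} {b : List Bool} {i : ℕ} (h : i < b.length) :
    (ga1Crossover k b)[i]'(by simp [h]) = if i < k then !(b[i]) else b[i] := by
  simp only [ga1Crossover]
  rcases Nat.lt_or_ge i k with hik | hik
  · rw [List.getElem_append_left (by simp; omega)]
    simp [List.getElem_take, hik]
  · rw [List.getElem_append_right (by simp; omega)]
    simp only [List.getElem_drop]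
    rw [if_neg (show ¬ i < k by omega)]
    congr 1
    simp
    omega

@[simp] lemma length_mutate (i : ℕ) (b : List Bool) :
    (ga1Mutate i b).length = b.length := by
  simp [ga1Mutate]

lemma getElem_mutate {i : ℕ} {b : List Bool} (hi : i < b.length) {j : ℕ} (h : j < b.length) :
    (ga1Mutate i b)[j]'(by simp [h]) = if j = i then !(b[i]'hi) else b[j] := by
  simp only [ga1Mutate]
  rw [List.getElem_set]
  rcases eq_or_ne i j with rfl | hne
  · simp [List.getElem?_eq_getElem hi]
  · simp [hne, Ne.symm hne]

lemma diff_crossover {k : ℕ} {b : List Bool} (h1 : 1 ≤ k) (h2 : k ≤ b.length - 1) :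
    diff (ga1Crossover k b) = (diff b).set (k - 1) (!(diff b).getD (k - 1) true) := by
  have hk : k - 1 < (diff b).length := by simp; omega
  apply List.ext_getElem
  · simp
  · intro j hj1 hj2
    have hjlen : j < b.length - 1 := by simpa using hj2
    rw [getElem_diff, getElem_crossover (by omega), getElem_crossover (by omega)]
    simp only [List.getElem_set]
    rcases eq_or_ne (k - 1) j with heq | hne
    · rw [if_pos heq, if_pos (show j < k by omega), if_neg (show ¬ j + 1 < k by omega),
        getD_diff hk]
      have e1 : b[k-1]'(by omega) = b[j]'(by omega : j < b.length) := getElem_idx_congr (by omega) _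
      have e2 : b[k-1+1]'(by omega) = b[j+1]'(by omega : j + 1 < b.length) := getElem_idx_congr (by omega) _
      rw [e1, e2]
      cases b[j]'(by omega : j < b.length) <;> cases b[j+1]'(by omega : j + 1 < b.length) <;> rfl
    · rw [if_neg hne, getElem_diff (by simpa using hj2)]
      rcases Nat.lt_or_ge j (k-1) with hlt | hge
      · rw [if_pos (show j < k by omega), if_pos (show j + 1 < k by omega)]
        cases b[j]'(by omega : j < b.length) <;> cases b[j+1]'(by omega : j + 1 < b.length) <;> rfl
      · rw [if_neg (show ¬ j < k by omega), if_neg (show ¬ j + 1 < k by omega)]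

set_option maxHeartbeats 2000000 in
lemma diff_mutate_mid {i : ℕ} {b : List Bool} (h1 : 0 < i) (h2 : i < b.length - 1) :
    diff (ga1Mutate i b) =
      ((diff b).set (i - 1) (!(diff b).getD (i - 1) true)).set i (!(diff b).getD i true) := by
  have hi : i < b.length := by omega
  have hi1 : i - 1 < (diff b).length := by simp; omega
  have hi2 : i < (diff b).length := by simp; omega
  apply List.ext_getElem
  · simp
  · intro j hj1 hj2
    have hjlen : j < b.length - 1 := by simpa using hj2
    rw [getElem_diff, getElem_mutate hi (by omega), getElem_mutate hi (by omega)]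
    simp only [List.getElem_set]
    rcases eq_or_ne i j with heq | hne
    · rw [if_pos (show j = i by omega), if_neg (show ¬ j + 1 = i by omega), if_pos heq,
        getD_diff hi2]
      have e1 : b[i]'hi = b[j]'(by omega : j < b.length) := getElem_idx_congr (by omega) _
      have e2 : b[i+1]'(by omega) = b[j+1]'(by omega : j + 1 < b.length) := getElem_idx_congr (by omega) _
      rw [e1, e2]
      cases b[j]'(by omega : j < b.length) <;> cases b[j+1]'(by omega : j + 1 < b.length) <;> rfl
    · rcases eq_or_ne (j + 1) i with heq2 | hne2
      · rw [if_neg (show ¬ j = i by omega), if_pos heq2, if_neg hne,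
          if_pos (show i - 1 = j by omega), getD_diff hi1]
        have e1 : b[i]'hi = b[j+1]'(by omega : j + 1 < b.length) := getElem_idx_congr (by omega) _
        have e2 : b[i-1]'(by omega) = b[j]'(by omega : j < b.length) := getElem_idx_congr (by omega) _
        have e3 : b[i-1+1]'(by omega) = b[j+1]'(by omega : j + 1 < b.length) := getElem_idx_congr (by omega) _
        rw [e1, e2, e3]
        cases b[j]'(by omega : j < b.length) <;> cases b[j+1]'(by omega : j + 1 < b.length) <;> rfl
      · rw [if_neg (show ¬ j = i by omega), if_neg hne2, if_neg hne,
          if_neg (show ¬ i - 1 = j by omega), getElem_diff (by simpa using hj2)]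

lemma diff_mutate_zero {b : List Bool} (h : 1 < b.length) :
    diff (ga1Mutate 0 b) = (diff b).set 0 (!(diff b).getD 0 true) := by
  have h0 : (0:ℕ) < (diff b).length := by simp; omega
  apply List.ext_getElem
  · simp
  · intro j hj1 hj2
    have hjlen : j < b.length - 1 := by simpa using hj2
    rw [getElem_diff, getElem_mutate (by omega) (by omega), getElem_mutate (by omega) (by omega)]
    simp only [List.getElem_set]
    rcases eq_or_ne (0:ℕ) j with heq | hne
    · rw [if_pos (show j = 0 by omega), if_neg (show ¬ j + 1 = 0 by omega), if_pos heq,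
        getD_diff h0]
      have e1 : b[0]'(by omega) = b[j]'(by omega : j < b.length) := getElem_idx_congr (by omega) _
      have e2 : b[0+1]'(by omega) = b[j+1]'(by omega : j + 1 < b.length) := getElem_idx_congr (by omega) _
      rw [e1, e2]
      cases b[j]'(by omega : j < b.length) <;> cases b[j+1]'(by omega : j + 1 < b.length) <;> rfl
    · rw [if_neg (show ¬ j = 0 by omega), if_neg (show ¬ j + 1 = 0 by omega), if_neg hne,
        getElem_diff (by simpa using hj2)]

lemma diff_mutate_last {b : List Bool} (h : 1 < b.length) :
    diff (ga1Mutate (b.length - 1) b) =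
      (diff b).set (b.length - 2) (!(diff b).getD (b.length - 2) true) := by
  have h0 : b.length - 2 < (diff b).length := by simp; omega
  apply List.ext_getElem
  · simp
  · intro j hj1 hj2
    have hjlen : j < b.length - 1 := by simpa using hj2
    rw [getElem_diff, getElem_mutate (by omega) (by omega), getElem_mutate (by omega) (by omega)]
    simp only [List.getElem_set]
    rcases eq_or_ne (b.length - 2) j with heq | hne
    · rw [if_neg (show ¬ j = b.length - 1 by omega), if_pos (show j + 1 = b.length - 1 by omega),
        if_pos heq, getD_diff h0]
      have e1 : b[b.length-1]'(by omega) = b[j+1]'(by omega : j + 1 < b.length) := getElem_idx_congr (by omega) _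
      have e2 : b[b.length-2]'(by omega) = b[j]'(by omega : j < b.length) := getElem_idx_congr (by omega) _
      have e3 : b[b.length-2+1]'(by omega) = b[j+1]'(by omega : j + 1 < b.length) := getElem_idx_congr (by omega) _
      rw [e1, e2, e3]
      cases b[j]'(by omega : j < b.length) <;> cases b[j+1]'(by omega : j + 1 < b.length) <;> rfl
    · rw [if_neg (show ¬ j = b.length - 1 by omega),
        if_neg (show ¬ j + 1 = b.length - 1 by omega), if_neg hne,
        getElem_diff (by simpa using hj2)]


def ent (d : List Bool) : ℕ := d.countP (fun x => x)

lemma entropy_eq (b : List Bool) : entropy b = ent (diff b) := by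
  simp [entropy, ent, diff, List.countP_map]
  rfl

lemma ent_le (d : List Bool) : ent d ≤ d.length := List.countP_le_length

lemma ent_set (d : List Bool) : ∀ (j : ℕ), j < d.length → ∀ (v : Bool),
    ent (d.set j v) + (if d.getD j true then 1 else 0) = ent d + (if v then 1 else 0) := by
  induction d with
  | nil => intro j h; simp at h
  | cons x t ih =>
    intro j hj v
    cases j with
    | zero => simp [ent, List.countP_cons]; cases x <;> cases v <;> simp
    | succ j =>
      have hj' : j < t.length := by simpa using hj
      have := ih j hj' v
      simp only [List.set_cons_succ, ent, List.countP_cons] at *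
      simp only [List.getD_cons_succ]
      omega
lemma mex_eq_of {S : Set ℕ} {x : ℕ} (h1 : x ∉ S) (h2 : ∀ y, y < x → y ∈ S) : mex S = x := by
  unfold mex
  apply le_antisymm
  · exact Nat.sInf_le h1
  · by_contra hlt
    push_neg at hlt
    have hmem : sInf {n : ℕ | n ∉ S} ∈ {n : ℕ | n ∉ S} := Nat.sInf_mem ⟨x, h1⟩
    exact hmem (h2 _ hlt)

lemma mem_of_lt_mex {S : Set ℕ} {y : ℕ} (h : y < mex S) : y ∈ S := by
  by_contra hy
  have : mex S ≤ y := Nat.sInf_le (show y ∈ {n : ℕ | n ∉ S} from hy)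
  omega

lemma mex_not_mem {S : Set ℕ} (h : ∃ n, n ∉ S) : mex S ∉ S := by
  obtain ⟨n, hn⟩ := h
  exact Nat.sInf_mem ⟨n, show n ∈ {n : ℕ | n ∉ S} from hn⟩

lemma mex_xor {S T : Set ℕ} {x y : ℕ} (hx : x ∉ S) (hx2 : ∀ u, u < x → u ∈ S)
    (hy : y ∉ T) (hy2 : ∀ u, u < y → u ∈ T) :
    mex {u | (∃ a ∈ S, u = a ^^^ y) ∨ (∃ b ∈ T, u = x ^^^ b)} = x ^^^ y := by
  apply mex_eq_of
  · rintro (⟨a, ha, hae⟩ | ⟨b, hb, hbe⟩)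
    · have : a = x := by
        have := congrArg (· ^^^ y) hae
        simpa [xor_cancel_right] using this.symm
      exact hx (this ▸ ha)
    · have : b = y := by
        have := congrArg (x ^^^ ·) hbe
        simpa [xor_cancel_left] using this.symm
      exact hy (this ▸ hb)
  · intro u hu
    rcases Nat.lt_xor_cases hu with h | h
    · exact Or.inl ⟨u ^^^ y, hx2 _ h, by simp [xor_cancel_right]⟩
    · exact Or.inr ⟨u ^^^ x, hy2 _ h, by rw [Nat.xor_comm]; simp [xor_cancel_right]⟩

lemma mex_eq_of' {S : Set ℕ} {x : ℕ} (hfin : S.Finite) (hx : x = mex S) :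
    x ∉ S ∧ ∀ y, y < x → y ∈ S := by
  subst hx
  refine ⟨mex_not_mem ?_, fun y hy => mem_of_lt_mex hy⟩
  obtain ⟨n, hn⟩ := hfin.infinite_compl.nonempty
  exact ⟨n, hn⟩

def kmove (d d' : List Bool) : Prop :=
  (∃ j, j < d.length ∧ d.getD j true = false ∧ d' = d.set j true) ∨
  (∃ j, j + 1 < d.length ∧ d.getD j true = false ∧ d.getD (j + 1) true = false ∧
    d' = (d.set j true).set (j + 1) true)

def W (K : ℕ → ℕ) : ℕ → List Bool → ℕ
  | a, [] => K a
  | a, x :: t => if x then K a ^^^ W K 0 t else W K (a + 1) t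

@[simp] lemma W_nil (K a) : W K a [] = K a := rfl
@[simp] lemma W_true (K a t) : W K a (true :: t) = K a ^^^ W K 0 t := rfl
@[simp] lemma W_false (K a t) : W K a (false :: t) = W K (a + 1) t := rfl

lemma W_append_replicate (K : ℕ → ℕ) (p : ℕ) : ∀ (a : ℕ) (t : List Bool),
    W K a (List.replicate p false ++ t) = W K (a + p) t := by
  induction p with
  | zero => simp
  | succ p ih =>
    intro a t
    rw [List.replicate_succ]
    simpa [Nat.add_assoc, Nat.add_comm 1 p] using ih (a + 1) t

lemma W_replicate (K : ℕ → ℕ) (a p : ℕ) : W K a (List.replicate p false) = K (a + p) := by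
  simpa using W_append_replicate K p a []

lemma W_row_T (K : ℕ → ℕ) (a : ℕ) (u : List Bool) :
    W K 0 (List.replicate a false ++ true :: u) = K a ^^^ W K 0 u := by
  rw [W_append_replicate]
  simp

/-- Option values of a single Kayles row of length `m`. -/
def RowOpts (K : ℕ → ℕ) (m : ℕ) : Set ℕ :=
  {x | ∃ a c : ℕ, (a + c + 1 = m ∨ a + c + 2 = m) ∧ x = K a ^^^ K c}

/-- Option values of a difference-list position. -/
def Opts (K : ℕ → ℕ) (d : List Bool) : Set ℕ := {x | ∃ d', kmove d d' ∧ x = W K 0 d'}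

lemma rowOpts_finite (K : ℕ → ℕ) (m : ℕ) : (RowOpts K m).Finite := by
  apply Set.Finite.subset (Set.Finite.image (f := fun p : ℕ × ℕ => K p.1 ^^^ K p.2)
    ((Set.finite_Iic m).prod (Set.finite_Iic m)))
  rintro x ⟨a, c, h, rfl⟩
  exact ⟨(a, c), ⟨by simp; omega, by simp; omega⟩, rfl⟩

lemma opts_finite (K : ℕ → ℕ) (d : List Bool) : (Opts K d).Finite := by
  apply Set.Finite.subset (Set.Finite.union
    (Set.Finite.image (f := fun j : ℕ => W K 0 (d.set j true)) (Set.finite_Iic d.length))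
    (Set.Finite.image (f := fun j : ℕ => W K 0 ((d.set j true).set (j + 1) true))
      (Set.finite_Iic d.length)))
  rintro x ⟨d', ⟨j, hj, _, rfl⟩ | ⟨j, hj, _, _, rfl⟩, rfl⟩
  · exact Or.inl ⟨j, by simp; omega, rfl⟩
  · exact Or.inr ⟨j, by simp; omega, rfl⟩

lemma K_mex (K : ℕ → ℕ) (hK0 : K 0 = 0) (hK1 : K 1 = 1)
    (hK : ∀ n, 2 ≤ n →
      K n = mex {m | ∃ a b : ℕ, (a + b = n - 1 ∨ a + b = n - 2) ∧ m = K a ^^^ K b})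
    (m : ℕ) : K m = mex (RowOpts K m) := by
  match m with
  | 0 =>
    rw [hK0]
    symm
    apply mex_eq_of
    · rintro ⟨a, c, h | h, _⟩ <;> omega
    · intro y hy; omega
  | 1 =>
    rw [hK1]
    symm
    apply mex_eq_of
    · rintro ⟨a, c, h | h, he⟩
      · have : a = 0 ∧ c = 0 := by omega
        rw [this.1, this.2, hK0] at he
        simp at he
      · omega
    · intro y hy
      have : y = 0 := by omega
      exact ⟨0, 0, Or.inl rfl, by simp [hK0, this]⟩
  | (m + 2) =>
    rw [hK (m + 2) (by omega)]
    congr 1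
    ext x
    constructor
    · rintro ⟨a, c, h | h, rfl⟩
      · exact ⟨a, c, Or.inl (by omega), rfl⟩
      · exact ⟨a, c, Or.inr (by omega), rfl⟩
    · rintro ⟨a, c, h | h, rfl⟩
      · exact ⟨a, c, Or.inl (by omega), rfl⟩
      · exact ⟨a, c, Or.inr (by omega), rfl⟩

lemma decomp (d : List Bool) :
    ∃ p t, d = List.replicate p false ++ t ∧ (t = [] ∨ ∃ v, t = true :: v) := by
  induction d with
  | nil => exact ⟨0, [], rfl, Or.inl rfl⟩
  | cons x tl ih =>
    cases x
    · obtain ⟨p, t, he, ht⟩ := ih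
      exact ⟨p + 1, t, by rw [List.replicate_succ, List.cons_append, ← he], ht⟩
    · exact ⟨0, true :: tl, rfl, Or.inr ⟨tl, rfl⟩⟩

lemma set_replicate_single (c : ℕ) : ∀ (a : ℕ),
    (List.replicate (a + 1 + c) false).set a true =
      List.replicate a false ++ true :: List.replicate c false := by
  intro a
  induction a with
  | zero => simp [List.replicate_succ, Nat.add_comm 1 c]
  | succ a ih =>
    have h : a + 1 + 1 + c = (a + 1 + c) + 1 := by omega
    rw [h, List.replicate_succ, List.set_cons_succ, ih, List.replicate_succ, List.cons_append]

lemma row_set_single {p a c : ℕ} (h : a + 1 + c = p) (v : List Bool) :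
    (List.replicate p false ++ v).set a true =
      List.replicate a false ++ true :: (List.replicate c false ++ v) := by
  rw [List.set_append_left _ _ (by simp; omega), ← h, set_replicate_single]
  simp

lemma row_set_double {p a c : ℕ} (h : a + 2 + c = p) (v : List Bool) :
    ((List.replicate p false ++ v).set a true).set (a + 1) true =
      List.replicate a false ++ true :: true :: (List.replicate c false ++ v) := by
  rw [row_set_single (show a + 1 + (1 + c) = p by omega) v]
  rw [List.set_append_right _ _ (by simp)]
  simp only [List.length_replicate, Nat.add_sub_cancel_left, List.set_cons_succ]
  have h1c : List.replicate (1 + c) false = false :: List.replicate c false := by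
    rw [Nat.add_comm 1 c, List.replicate_succ]
  rw [h1c, List.cons_append, List.set_cons_zero]

lemma tail_set (p j : ℕ) (v : List Bool) (x : Bool) :
    (List.replicate p false ++ true :: v).set (p + 1 + j) x =
      List.replicate p false ++ true :: v.set j x := by
  rw [List.set_append_right _ _ (by simp; omega)]
  simp only [List.length_replicate]
  have : p + 1 + j - p = j + 1 := by omega
  rw [this, List.set_cons_succ]

lemma getD_row {p j : ℕ} (h : j < p) (v : List Bool) :
    (List.replicate p false ++ v).getD j true = false := by
  rw [List.getD_append _ _ _ _ (by simp; omega)]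
  rw [List.getD_eq_getElem _ _ (by simp; omega)]
  simp

lemma getD_at_p (p : ℕ) (v : List Bool) :
    (List.replicate p false ++ true :: v).getD p true = true := by
  rw [List.getD_append_right _ _ _ _ (by simp)]
  simp

lemma getD_tail (p j : ℕ) (v : List Bool) :
    (List.replicate p false ++ true :: v).getD (p + 1 + j) true = v.getD j true := by
  rw [List.getD_append_right _ _ _ _ (by simp; omega)]
  simp only [List.length_replicate]
  have : p + 1 + j - p = j + 1 := by omega
  rw [this, List.getD_cons_succ]

lemma getD_replicate {p j : ℕ} (h : j < p) :
    (List.replicate p false).getD j true = false := by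
  have := getD_row h ([] : List Bool)
  simpa using this

lemma opts_row (K : ℕ → ℕ) (hK0 : K 0 = 0) (p : ℕ) :
    Opts K (List.replicate p false) = RowOpts K p := by
  ext x
  constructor
  · rintro ⟨d', ⟨j, hj, hf, rfl⟩ | ⟨j, hj, hf1, hf2, rfl⟩, rfl⟩
    · simp only [List.length_replicate] at hj
      obtain ⟨c, rfl⟩ : ∃ c, p = j + 1 + c := ⟨p - j - 1, by omega⟩
      rw [set_replicate_single, W_row_T, W_replicate]
      exact ⟨j, c, Or.inl (by omega), by rw [Nat.zero_add]⟩
    · simp only [List.length_replicate] at hj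
      obtain ⟨c, rfl⟩ : ∃ c, p = j + 2 + c := ⟨p - j - 2, by omega⟩
      have hnil : List.replicate (j + 2 + c) false =
          List.replicate (j + 2 + c) false ++ [] := (List.append_nil _).symm
      rw [hnil, row_set_double rfl, W_row_T]
      simp only [W_true, List.append_nil, W_replicate, hK0, Nat.zero_add, Nat.zero_xor]
      exact ⟨j, c, Or.inr (by omega), rfl⟩
  · rintro ⟨a, c, h | h, rfl⟩
    · refine ⟨(List.replicate p false).set a true,
        Or.inl ⟨a, by simp; omega, getD_replicate (by omega), rfl⟩, ?_⟩
      obtain rfl : p = a + 1 + c := by omega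
      rw [set_replicate_single, W_row_T, W_replicate, Nat.zero_add]
    · refine ⟨((List.replicate p false).set a true).set (a + 1) true,
        Or.inr ⟨a, by simp; omega, getD_replicate (by omega), getD_replicate (by omega), rfl⟩, ?_⟩
      obtain rfl : p = a + 2 + c := by omega
      have hnil : List.replicate (a + 2 + c) false =
          List.replicate (a + 2 + c) false ++ [] := (List.append_nil _).symm
      rw [hnil, row_set_double rfl, W_row_T]
      simp [hK0, W_replicate]

lemma opts_split (K : ℕ → ℕ) (hK0 : K 0 = 0) (p : ℕ) (v : List Bool) :
    Opts K (List.replicate p false ++ true :: v) =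
      {u | (∃ a ∈ RowOpts K p, u = a ^^^ W K 0 v) ∨ (∃ x ∈ Opts K v, u = K p ^^^ x)} := by
  have hlen : (List.replicate p false ++ true :: v).length = p + 1 + v.length := by simp; omega
  ext u
  constructor
  · rintro ⟨d', ⟨j, hj, hf, rfl⟩ | ⟨j, hj, hf1, hf2, rfl⟩, rfl⟩
    · rw [hlen] at hj
      rcases lt_trichotomy j p with hlt | rfl | hgt
      · obtain ⟨c, rfl⟩ : ∃ c, p = j + 1 + c := ⟨p - j - 1, by omega⟩
        rw [row_set_single rfl, W_row_T, W_row_T]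
        exact Or.inl ⟨K j ^^^ K c, ⟨j, c, Or.inl (by omega), rfl⟩, (Nat.xor_assoc _ _ _).symm⟩
      · rw [getD_at_p] at hf
        cases hf
      · obtain ⟨j', rfl⟩ : ∃ j', j = p + 1 + j' := ⟨j - p - 1, by omega⟩
        rw [getD_tail] at hf
        rw [tail_set, W_row_T]
        exact Or.inr ⟨W K 0 (v.set j' true),
          ⟨v.set j' true, Or.inl ⟨j', by omega, hf, rfl⟩, rfl⟩, rfl⟩
    · rw [hlen] at hj
      rcases lt_trichotomy (j + 1) p with hlt | heq | hgt
      · obtain ⟨c, rfl⟩ : ∃ c, p = j + 2 + c := ⟨p - j - 2, by omega⟩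
        rw [row_set_double rfl, W_row_T]
        simp only [W_true, hK0, Nat.zero_xor, W_row_T]
        exact Or.inl ⟨K j ^^^ K c, ⟨j, c, Or.inr (by omega), rfl⟩, (Nat.xor_assoc _ _ _).symm⟩
      · rw [← heq, getD_at_p] at hf2
        cases hf2
      · rcases eq_or_ne j p with rfl | hne
        · rw [getD_at_p] at hf1
          cases hf1
        · obtain ⟨j', rfl⟩ : ∃ j', j = p + 1 + j' := ⟨j - p - 1, by omega⟩
          rw [getD_tail] at hf1
          have e : p + 1 + j' + 1 = p + 1 + (j' + 1) := by omega
          rw [e, getD_tail] at hf2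
          rw [tail_set, e, tail_set, W_row_T]
          exact Or.inr ⟨W K 0 ((v.set j' true).set (j' + 1) true),
            ⟨(v.set j' true).set (j' + 1) true, Or.inr ⟨j', by omega, hf1, hf2, rfl⟩, rfl⟩, rfl⟩
  · rintro (⟨a', ⟨a, c, h | h, rfl⟩, rfl⟩ | ⟨x, ⟨v', hkv, rfl⟩, rfl⟩)
    · refine ⟨(List.replicate p false ++ true :: v).set a true,
        Or.inl ⟨a, by rw [hlen]; omega, getD_row (by omega) _, rfl⟩, ?_⟩
      obtain rfl : p = a + 1 + c := by omega
      rw [row_set_single rfl, W_row_T, W_row_T, Nat.xor_assoc]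
    · refine ⟨((List.replicate p false ++ true :: v).set a true).set (a + 1) true,
        Or.inr ⟨a, by rw [hlen]; omega, getD_row (by omega) _, getD_row (by omega) _, rfl⟩, ?_⟩
      obtain rfl : p = a + 2 + c := by omega
      rw [row_set_double rfl, W_row_T]
      simp only [W_true, hK0, Nat.zero_xor, W_row_T, Nat.xor_assoc]
    · rcases hkv with ⟨j, hj, hf, rfl⟩ | ⟨j, hj, hf1, hf2, rfl⟩
      · refine ⟨(List.replicate p false ++ true :: v).set (p + 1 + j) true,
          Or.inl ⟨p + 1 + j, by rw [hlen]; omega, by rw [getD_tail]; exact hf, rfl⟩, ?_⟩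
        rw [tail_set, W_row_T]
      · have e : p + 1 + j + 1 = p + 1 + (j + 1) := by omega
        refine ⟨((List.replicate p false ++ true :: v).set (p + 1 + j) true).set
            (p + 1 + j + 1) true,
          Or.inr ⟨p + 1 + j, by rw [hlen]; omega, by rw [getD_tail]; exact hf1,
            by rw [e, getD_tail]; exact hf2, rfl⟩, ?_⟩
        rw [tail_set, e, tail_set, W_row_T]

lemma W_mex (K : ℕ → ℕ) (hK0 : K 0 = 0) (hK1 : K 1 = 1)
    (hK : ∀ n, 2 ≤ n →
      K n = mex {m | ∃ a b : ℕ, (a + b = n - 1 ∨ a + b = n - 2) ∧ m = K a ^^^ K b}) :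
    ∀ (N : ℕ) (d : List Bool), d.length ≤ N → W K 0 d = mex (Opts K d) := by
  intro N
  induction N with
  | zero =>
    intro d hd
    obtain rfl : d = [] := List.length_eq_zero_iff.mp (by omega)
    have : Opts K [] = RowOpts K 0 := by rw [← opts_row K hK0 0]; rfl
    rw [this, ← K_mex K hK0 hK1 hK 0]
    simp [hK0]
  | succ N ih =>
    intro d hd
    obtain ⟨p, t, rfl, rfl | ⟨v, rfl⟩⟩ := decomp d
    · rw [List.append_nil]
      rw [opts_row K hK0 p, ← K_mex K hK0 hK1 hK p, W_replicate, Nat.zero_add]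
    · have hlv : v.length ≤ N := by
        have := hd
        simp at this
        omega
      rw [opts_split K hK0 p v, W_row_T]
      have hx := mex_eq_of' (rowOpts_finite K p) (K_mex K hK0 hK1 hK p)
      have hy := mex_eq_of' (opts_finite K v) (ih v hlv)
      exact (mex_xor hx.1 hx.2 hy.1 hy.2).symm


lemma getD_set_ne {l : List Bool} {i j : ℕ} (h : i ≠ j) (x dflt : Bool) :
    (l.set i x).getD j dflt = l.getD j dflt := by
  simp [List.getD_eq_getElem?_getD, List.getElem?_set_ne h]

lemma move_length {b b' : List Bool} (h : ga1Move b b') : b'.length = b.length := by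
  rcases h.1 with ⟨k, _, _, rfl⟩ | ⟨i, _, rfl⟩
  · exact length_crossover k b
  · exact length_mutate i b

lemma move_imp_kmove {b b' : List Bool} (h : ga1Move b b') : kmove (diff b) (diff b') := by
  obtain ⟨hmv, hent⟩ := h
  rw [entropy_eq, entropy_eq] at hent
  rcases hmv with ⟨k, hk1, hk2, rfl⟩ | ⟨i, hi, rfl⟩
  · have hb : 1 < b.length := by omega
    have hj : k - 1 < (diff b).length := by simp; omega
    have hset := diff_crossover hk1 hk2
    rw [hset] at hent
    cases hval : (diff b).getD (k - 1) true with
    | false =>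
      left
      exact ⟨k - 1, hj, hval, by rw [hset, hval]; rfl⟩
    | true =>
      exfalso
      have he := ent_set (diff b) (k - 1) hj (!(diff b).getD (k - 1) true)
      rw [hval] at he hent
      simp at he hent
      omega
  · have hb : 1 < b.length := by
      by_contra h1
      have h2 : ent (diff (ga1Mutate i b)) ≤ (diff (ga1Mutate i b)).length := ent_le _
      have h3 : (diff (ga1Mutate i b)).length = b.length - 1 := by simp
      omega
    rcases Nat.eq_zero_or_pos i with rfl | hipos
    · have hset := diff_mutate_zero hb
      rw [hset] at hent
      have hj : (0:ℕ) < (diff b).length := by simp; omega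
      cases hval : (diff b).getD 0 true with
      | false =>
        left
        exact ⟨0, hj, hval, by rw [hset, hval]; rfl⟩
      | true =>
        exfalso
        have he := ent_set (diff b) 0 hj (!(diff b).getD 0 true)
        rw [hval] at he hent
        simp at he hent
        omega
    · rcases eq_or_ne i (b.length - 1) with rfl | hmid
      · have hset := diff_mutate_last hb
        rw [hset] at hent
        have hj : b.length - 2 < (diff b).length := by simp; omega
        cases hval : (diff b).getD (b.length - 2) true with
        | false =>
          left
          exact ⟨b.length - 2, hj, hval, by rw [hset, hval]; rfl⟩
        | true =>
          exfalso
          have he := ent_set (diff b) (b.length - 2) hj (!(diff b).getD (b.length - 2) true)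
          rw [hval] at he hent
          simp at he hent
          omega
      · have him : i < b.length - 1 := by omega
        have hset := diff_mutate_mid hipos him
        rw [hset] at hent
        have hj1 : i - 1 < (diff b).length := by simp; omega
        have hj2 : i < (diff b).length := by simp; omega
        have he1 := ent_set (diff b) (i - 1) hj1 (!(diff b).getD (i - 1) true)
        have he2 := ent_set ((diff b).set (i - 1) (!(diff b).getD (i - 1) true)) i
          (by simpa using hj2) (!(diff b).getD i true)
        rw [getD_set_ne (by omega) _ _] at he2
        cases hval1 : (diff b).getD (i - 1) true with
        | true =>
          exfalso
          rw [hval1] at he1 he2 hent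
          cases hval2 : (diff b).getD i true <;> rw [hval2] at he2 hent <;>
            simp at he1 he2 hent <;> omega
        | false =>
          cases hval2 : (diff b).getD i true with
          | true =>
            exfalso
            rw [hval1] at he1 he2 hent
            rw [hval2] at he2 hent
            simp at he1 he2 hent
            omega
          | false =>
            right
            refine ⟨i - 1, by omega, hval1, by rw [show i - 1 + 1 = i by omega]; exact hval2, ?_⟩
            rw [hset, hval1, hval2, show i - 1 + 1 = i by omega]
            rfl

lemma kmove_imp_move {b d' : List Bool} (h : kmove (diff b) d') :
    ∃ b', ga1Move b b' ∧ diff b' = d' := by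
  rcases h with ⟨j, hj, hf, rfl⟩ | ⟨j, hj, hf1, hf2, rfl⟩
  · have hlen : j < b.length - 1 := by simpa using hj
    have hdiff : diff (ga1Crossover (j + 1) b) = (diff b).set j true := by
      rw [diff_crossover (by omega) (by omega)]
      simp only [Nat.add_sub_cancel]
      rw [hf]
      rfl
    refine ⟨ga1Crossover (j + 1) b, ⟨Or.inl ⟨j + 1, by omega, by omega, rfl⟩, ?_⟩, hdiff⟩
    rw [entropy_eq, entropy_eq, hdiff]
    have he := ent_set (diff b) j hj true
    rw [hf] at he
    simp at he
    omega
  · have hlen : j + 1 < b.length - 1 := by simpa using hj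
    have e : j + 1 - 1 = j := by omega
    have hdiff : diff (ga1Mutate (j + 1) b) = ((diff b).set j true).set (j + 1) true := by
      rw [diff_mutate_mid (by omega) (by omega), e, hf1, hf2]
      rfl
    refine ⟨ga1Mutate (j + 1) b, ⟨Or.inr ⟨j + 1, by omega, rfl⟩, ?_⟩, hdiff⟩
    rw [entropy_eq, entropy_eq, hdiff]
    have he1 := ent_set (diff b) j (by omega) true
    have he2 := ent_set ((diff b).set j true) (j + 1) (by simpa using hj) true
    rw [getD_set_ne (by omega) _ _, hf2] at he2
    rw [hf1] at he1
    simp at he1 he2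
    omega


lemma g_eq_W (g : List Bool → ℕ)
    (hg : ∀ b, g b = mex {m | ∃ b', ga1Move b b' ∧ m = g b'})
    (K : ℕ → ℕ) (hK0 : K 0 = 0) (hK1 : K 1 = 1)
    (hK : ∀ n, 2 ≤ n →
      K n = mex {m | ∃ a b : ℕ, (a + b = n - 1 ∨ a + b = n - 2) ∧ m = K a ^^^ K b}) :
    ∀ (N : ℕ) (b : List Bool), b.length - entropy b ≤ N → g b = W K 0 (diff b) := by
  intro N
  induction N with
  | zero =>
    intro b hb
    have hb0 : b = [] := by
      have h1 : entropy b = ent (diff b) := entropy_eq b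
      have h2 : ent (diff b) ≤ (diff b).length := ent_le _
      have h3 : (diff b).length = b.length - 1 := by simp
      have : b.length = 0 := by omega
      exact List.length_eq_zero_iff.mp this
    subst hb0
    rw [hg []]
    have hempty : {m | ∃ b', ga1Move [] b' ∧ m = g b'} = (∅ : Set ℕ) := by
      ext m
      simp only [Set.mem_empty_iff_false, iff_false, Set.mem_setOf_eq]
      rintro ⟨b', ⟨⟨k, hk1, hk2, _⟩ | ⟨i, hi, _⟩, _⟩, _⟩
      · simp at hk2
        omega
      · simp at hi
    rw [hempty]
    show mex ∅ = W K 0 (diff [])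
    have hW : W K 0 (diff []) = K 0 := rfl
    rw [hW, hK0]
    exact mex_eq_of (Set.notMem_empty 0) (fun y hy => absurd hy (Nat.not_lt_zero y))
  | succ N ih =>
    intro b hb
    rw [hg b]
    have hset : {m | ∃ b', ga1Move b b' ∧ m = g b'} = Opts K (diff b) := by
      ext m
      constructor
      · rintro ⟨b', hmv, rfl⟩
        have hmeas : b'.length - entropy b' ≤ N := by
          have h1 := move_length hmv
          have h2 := hmv.2
          omega
        exact ⟨diff b', move_imp_kmove hmv, ih b' hmeas⟩
      · rintro ⟨d', hk, rfl⟩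
        obtain ⟨b', hmv, hdiff⟩ := kmove_imp_move hk
        have hmeas : b'.length - entropy b' ≤ N := by
          have h1 := move_length hmv
          have h2 := hmv.2
          omega
        exact ⟨b', hmv, by rw [ih b' hmeas, hdiff]⟩
    rw [hset]
    exact (W_mex K hK0 hK1 hK (diff b).length (diff b) le_rfl).symm

lemma diff_replicate (n : ℕ) (c : Bool) :
    diff (List.replicate n c) = List.replicate (n - 1) false := by
  apply List.ext_getElem
  · simp
  · intro j h1 h2
    rw [getElem_diff h1]
    simp

end GA1Aux

/-- For every `n ≥ 1`, the Grundy value of the GA1 position given by the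
constant bit string of length `n` equals the single-heap Kayles Grundy value `K (n-1)`.
Here `g` is the GA1 Grundy function (characterized by the mex recurrence over legal moves)
and `K` is the single-heap Kayles Grundy function, characterized by `K 0 = 0`, `K 1 = 1`,
and `K n = mex { K a XOR K b : a + b ∈ {n-1, n-2} }` for `n ≥ 2`. -/
theorem ga1_const_grundy_eq_kayles
    (g : List Bool → ℕ)
    (hg : ∀ b, g b = mex {m | ∃ b', ga1Move b b' ∧ m = g b'})
    (K : ℕ → ℕ)
    (hK0 : K 0 = 0) (hK1 : K 1 = 1)
    (hK : ∀ n, 2 ≤ n →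
      K n = mex {m | ∃ a b : ℕ, (a + b = n - 1 ∨ a + b = n - 2) ∧ m = K a ^^^ K b})
    (n : ℕ) (hn : 1 ≤ n) (c : Bool) :
    g (List.replicate n c) = K (n - 1) := by
  have h := GA1Aux.g_eq_W g hg K hK0 hK1 hK (List.replicate n c).length
    (List.replicate n c) (Nat.sub_le _ _)
  rw [h, GA1Aux.diff_replicate, GA1Aux.W_replicate, Nat.zero_add]
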